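/- Let α, β, θ, γ > 0 with α < β, and let x₀ ≤ 0. Then the function x(t) = (x₀ − (α − β)/γ)·e^{−γt} + (α − β)/γ satisfies x(t) ≤ 0 for all t ≥ 0 and solves the fluid equation x(t) = x₀ + (α − β)t − θ∫₀ᵗ x⁺(s) ds + γ∫₀ᵗ x⁻(s) ds for all t ≥ 0. -/

import Mathlib

/-- `x : ℝ → ℝ`, viewed as a function on `[0,∞)`, is a continuous solution of the fluid
equation `x(t) = x₀ + (α - β)t - θ∫₀ᵗ x⁺(s) ds + γ∫₀ᵗ x⁻(s) ds` for `t ≥ 0`. -/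
def IsFluidSolution (α β θ γ x₀ : ℝ) (x : ℝ → ℝ) : Prop :=
  ContinuousOn x (Set.Ici 0) ∧
    ∀ t : ℝ, 0 ≤ t →
      x t = x₀ + (α - β) * t - θ * (∫ s in (0:ℝ)..t, max (x s) 0)
        + γ * (∫ s in (0:ℝ)..t, max (-x s) 0)

/-- For `α < β` and `x₀ ≤ 0`, the function
`x(t) = (x₀ - (α - β)/γ)·e^{-γt} + (α - β)/γ` is nonpositive on `[0,∞)` and solves the fluid
equation. -/
theorem stmt_9 (α β θ γ x₀ : ℝ) (hα : 0 < α) (hβ : 0 < β) (hθ : 0 < θ) (hγ : 0 < γ)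
    (hαβ : α < β) (hx₀ : x₀ ≤ 0)
    (x : ℝ → ℝ)
    (hx : ∀ t : ℝ, x t = (x₀ - (α - β) / γ) * Real.exp (-(γ * t)) + (α - β) / γ) :
    (∀ t : ℝ, 0 ≤ t → x t ≤ 0) ∧ IsFluidSolution α β θ γ x₀ x := by
  set c : ℝ := (α - β) / γ with hcdef
  have hc : c < 0 := div_neg_of_neg_of_pos (by linarith) hγ
  have hnonpos : ∀ t : ℝ, 0 ≤ t → x t ≤ 0 := by
    intro t ht
    rw [hx t]
    have he1 : Real.exp (-(γ * t)) ≤ 1 := Real.exp_le_one_iff.mpr (by nlinarith)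
    have he0 : 0 < Real.exp (-(γ * t)) := Real.exp_pos _
    rcases le_or_gt 0 (x₀ - c) with h | h
    · nlinarith
    · nlinarith
  have hxf : x = fun t => (x₀ - c) * Real.exp (-(γ * t)) + c := funext hx
  have hcont : Continuous x := by rw [hxf]; continuity
  refine ⟨hnonpos, hcont.continuousOn, ?_⟩
  intro t ht
  have huIcc : Set.uIcc (0:ℝ) t = Set.Icc 0 t := Set.uIcc_of_le ht
  have h1 : (∫ s in (0:ℝ)..t, max (x s) 0) = 0 := by
    rw [intervalIntegral.integral_congr (g := fun _ => (0:ℝ))]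
    · simp
    · intro s hs
      rw [huIcc] at hs
      exact max_eq_right (hnonpos s hs.1)
  have h2 : (∫ s in (0:ℝ)..t, max (-x s) 0) = ∫ s in (0:ℝ)..t, -(x s) := by
    apply intervalIntegral.integral_congr
    intro s hs
    rw [huIcc] at hs
    exact max_eq_left (by simpa using hnonpos s hs.1)
  have hI : (∫ s in (0:ℝ)..t, x s)
      = (-(x₀ - c) / γ * Real.exp (-(γ * t)) + c * t)
        - (-(x₀ - c) / γ * Real.exp (-(γ * 0)) + c * 0) := by
    apply intervalIntegral.integral_eq_sub_of_hasDerivAt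
        (f := fun s => -(x₀ - c) / γ * Real.exp (-(γ * s)) + c * s)
    · intro s _
      rw [hx s]
      have hd : HasDerivAt (fun s : ℝ => Real.exp (-(γ * s)))
          (Real.exp (-(γ * s)) * (-γ)) s := by
        have := ((hasDerivAt_id s).const_mul γ).neg.exp
        simpa using this
      have := (hd.const_mul (-(x₀ - c) / γ)).add ((hasDerivAt_id s).const_mul c)
      convert this using 1
      · rfl
      field_simp
    · exact hcont.intervalIntegrable 0 t
  rw [h1, h2, intervalIntegral.integral_neg, hI, hx t]
  have hγ' : γ ≠ 0 := ne_of_gt hγ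
  simp only [hcdef]
  field_simp
  simp only [mul_zero, neg_zero, Real.exp_zero]
  ring
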